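/- Let N and v be integers with 2 ≤ v ≤ N+1. Let LAK_{(1,1)}(N,v) (respectively LAK_{(1̄,1)}(N,v), LAK_{(1,1̄)}(N,v), LAK_{(1̄,1̄)}(N,v)) denote the largest k for which there exists an N×k array on v symbols whose kv fibers are pairwise distinct (respectively: pairwise distinct and all nonempty; pairwise distinct with no fiber equal to the full row set {1,…,N}; pairwise distinct, all nonempty, and no fiber equal to {1,…,N}). Then: (1) LAK_{(1,1̄)}(N,v) = LAK_{(1,1)}(N,v) if v ≥ 3, and LAK_{(1,1̄)}(N,2) = 2^{N−1} − 1; (2) if moreover v ≤ N, then LAK_{(1̄,1̄)}(N,v) = LAK_{(1̄,1)}(N,v). -/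

import Mathlib

/-- The fiber of the pair `p = (c,σ)` in the `N × k` array `A` on `v` symbols:
the set of rows `r` with `A r c = σ`. -/
def fiber (N k v : ℕ) (A : Fin N → Fin k → Fin v) (p : Fin k × Fin v) : Set (Fin N) :=
  {r : Fin N | A r p.1 = p.2}

/-- Let `LAK_{(1,1)}(N,v)` (resp. `LAK_{(1̄,1)}`, `LAK_{(1,1̄)}`, `LAK_{(1̄,1̄)}`) be the
largest `k` admitting an `N × k` array on `v` symbols whose `k·v` fibers are pairwise
distinct (resp. pairwise distinct and all nonempty; pairwise distinct with no fiber
equal to the full row set; pairwise distinct, all nonempty, and with no fiber equal to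
the full row set). For `2 ≤ v ≤ N+1`:
(1) `LAK_{(1,1̄)}(N,v) = LAK_{(1,1)}(N,v)` if `v ≥ 3`, and `LAK_{(1,1̄)}(N,2) = 2^{N−1}−1`;
(2) if moreover `v ≤ N`, then `LAK_{(1̄,1̄)}(N,v) = LAK_{(1̄,1)}(N,v)`. -/
theorem stmt19 (N v : ℕ) (hv : 2 ≤ v) (hvN : v ≤ N + 1) :
    (3 ≤ v →
      sSup {k : ℕ | ∃ A : Fin N → Fin k → Fin v,
          Function.Injective (fiber N k v A) ∧ ∀ p, fiber N k v A p ≠ Set.univ}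
        = sSup {k : ℕ | ∃ A : Fin N → Fin k → Fin v,
            Function.Injective (fiber N k v A)}) ∧
    (sSup {k : ℕ | ∃ A : Fin N → Fin k → Fin 2,
          Function.Injective (fiber N k 2 A) ∧ ∀ p, fiber N k 2 A p ≠ Set.univ}
        = 2 ^ (N - 1) - 1) ∧
    (v ≤ N →
      sSup {k : ℕ | ∃ A : Fin N → Fin k → Fin v,
          Function.Injective (fiber N k v A) ∧ (∀ p, (fiber N k v A p).Nonempty) ∧
          ∀ p, fiber N k v A p ≠ Set.univ}
        = sSup {k : ℕ | ∃ A : Fin N → Fin k → Fin v,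
            Function.Injective (fiber N k v A) ∧ ∀ p, (fiber N k v A p).Nonempty}) := by
  have hN : 1 ≤ N := by omega
  refine ⟨?_, ?_, ?_⟩
  · -- part 1 (v ≥ 3): the two sets are equal
    intro hv3
    congr 1
    ext k
    simp only [Set.mem_setOf_eq]
    constructor
    · rintro ⟨A, hinj, -⟩; exact ⟨A, hinj⟩
    · rintro ⟨A, hinj⟩
      refine ⟨A, hinj, ?_⟩
      rintro ⟨c, σ⟩ huniv
      have hcard : 1 < (Finset.univ.erase σ).card := by
        rw [Finset.card_erase_of_mem (Finset.mem_univ σ), Finset.card_univ, Fintype.card_fin]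
        omega
      obtain ⟨a, ha, b, hb, hab⟩ := Finset.one_lt_card.mp hcard
      have hσ : ∀ r : Fin N, A r c = σ := fun r => (Set.ext_iff.mp huniv r).mpr trivial
      have hempty : ∀ x : Fin v, x ∈ Finset.univ.erase σ → fiber N k v A (c, x) = ∅ := by
        intro x hx
        ext r
        simp only [fiber, Set.mem_setOf_eq, Set.mem_empty_iff_false, iff_false]
        intro h
        exact (Finset.mem_erase.mp hx).1 (h.symm.trans (hσ r))
      have := hinj ((hempty a ha).trans (hempty b hb).symm)
      exact hab (congrArg Prod.snd this)
  · -- part 2 (v = 2)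
    classical
    set r0 : Fin N := ⟨0, by omega⟩ with hr0
    set m := 2 ^ (N - 1) - 1 with hm
    set C : Finset (Finset (Fin N)) :=
      Finset.univ.powerset.filter (fun s => r0 ∈ s) with hC
    set B : Finset (Finset (Fin N)) := C.erase Finset.univ with hB
    have hCcard : C.card = 2 ^ (N - 1) := by
      have : C.card = ((Finset.univ.erase r0).powerset).card := by
        apply Finset.card_nbij' (fun s => s.erase r0) (fun s => insert r0 s)
        · intro s hs
          rw [Finset.mem_coe, Finset.mem_powerset]
          intro x hx
          rw [Finset.mem_erase] at hx ⊢
          exact ⟨hx.1, Finset.mem_univ x⟩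
        · intro s hs
          rw [Finset.mem_coe, Finset.mem_powerset] at hs
          simp only [hC, Finset.mem_coe, Finset.mem_filter, Finset.mem_powerset]
          exact ⟨Finset.subset_univ _, Finset.mem_insert_self _ _⟩
        · intro s hs
          simp only [hC, Finset.mem_coe, Finset.mem_filter] at hs
          exact Finset.insert_erase hs.2
        · intro s hs
          rw [Finset.mem_coe, Finset.mem_powerset] at hs
          apply Finset.erase_insert
          intro h
          exact (Finset.mem_erase.mp (hs h)).1 rfl
      rw [this, Finset.card_powerset, Finset.card_erase_of_mem (Finset.mem_univ r0),
        Finset.card_univ, Fintype.card_fin]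
    have hunivC : Finset.univ ∈ C := by
      simp [hC]
    have hBcard : B.card = m := by
      rw [hB, Finset.card_erase_of_mem hunivC, hCcard, hm]
    -- membership properties of elements of B
    have hBmem : ∀ s ∈ B, r0 ∈ s ∧ s ≠ Finset.univ := by
      intro s hs
      rw [hB, Finset.mem_erase] at hs
      simp only [hC, Finset.mem_filter] at hs
      exact ⟨hs.2.2, hs.1⟩
    apply le_antisymm
    · -- upper bound
      apply csSup_le
      · exact ⟨0, fun _ c => Fin.elim0 c, fun p => Fin.elim0 p.1, fun p => Fin.elim0 p.1⟩
      rintro k ⟨A, hinj, hnu⟩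
      set g : Fin k → Finset (Fin N) :=
        fun c => Finset.univ.filter (fun r => A r c = A r0 c) with hg
      have hfg : ∀ c, fiber N k 2 A (c, A r0 c) = {r | r ∈ g c} := by
        intro c
        ext r
        simp [fiber, hg]
      have hgB : ∀ c, g c ∈ B := by
        intro c
        rw [hB, Finset.mem_erase]
        constructor
        · intro h
          apply hnu (c, A r0 c)
          rw [hfg c, h]
          ext r; simp
        · simp [hC, hg]
      have hginj : Function.Injective g := by
        intro c c' h
        have : fiber N k 2 A (c, A r0 c) = fiber N k 2 A (c', A r0 c') := by
          rw [hfg, hfg, h]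
        exact congrArg Prod.fst (hinj this)
      have : Fintype.card (Fin k) ≤ Fintype.card B := by
        apply Fintype.card_le_of_injective (fun c => (⟨g c, hgB c⟩ : B))
        intro c c' h
        exact hginj (Subtype.ext_iff.mp h)
      rwa [Fintype.card_fin, Fintype.card_coe, hBcard] at this
    · -- construction: m is attained
      have hcardB : Fintype.card B = m := by rw [Fintype.card_coe, hBcard]
      have e : Fin m ≃ B := (Fintype.equivFinOfCardEq hcardB).symm
      set S : Fin m → Finset (Fin N) := fun c => ((e c : B) : Finset (Fin N)) with hS
      have hSr0 : ∀ c, r0 ∈ S c := fun c => (hBmem _ (e c).2).1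
      have hSuniv : ∀ c, S c ≠ Finset.univ := fun c => (hBmem _ (e c).2).2
      have hSinj : Function.Injective S := by
        intro c c' h
        exact e.injective (Subtype.ext h)
      set A : Fin N → Fin m → Fin 2 := fun r c => if r ∈ S c then 1 else 0 with hA
      have hf1 : ∀ c, fiber N m 2 A (c, 1) = {r | r ∈ S c} := by
        intro c; ext r
        simp only [fiber, Set.mem_setOf_eq, hA]
        split <;> simp_all
      have hf0 : ∀ c, fiber N m 2 A (c, 0) = {r | r ∉ S c} := by
        intro c; ext r
        simp only [fiber, Set.mem_setOf_eq, hA]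
        split <;> simp_all
      apply le_csSup
      · -- bounded above by m (reuse upper bound argument? just give 2^N as bound)
        refine ⟨2 ^ N, ?_⟩
        rintro k ⟨A', hinj', -⟩
        have : Fintype.card (Fin k) ≤ Fintype.card (Set (Fin N)) := by
          apply Fintype.card_le_of_injective (fun c => fiber N k 2 A' (c, 1))
          intro c c' h
          exact congrArg Prod.fst (hinj' h)
        simpa using this
      have h2 : ∀ σ : Fin 2, σ = 0 ∨ σ = 1 := by decide
      refine ⟨A, ?_, ?_⟩
      · rintro ⟨c, σ⟩ ⟨c', σ'⟩ h
        rcases h2 σ with rfl | rfl <;> rcases h2 σ' with rfl | rfl <;>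
          simp only [hf0, hf1] at h
        · have : S c = S c' := by
            ext r
            have := Set.ext_iff.mp h r
            simp only [Set.mem_setOf_eq] at this
            exact not_iff_not.mp this
          rw [hSinj this]
        · exact absurd ((Set.ext_iff.mp h r0).mpr (hSr0 c')) (not_not_intro (hSr0 c))
        · exact absurd ((Set.ext_iff.mp h r0).mp (hSr0 c)) (not_not_intro (hSr0 c'))
        · have : S c = S c' := by
            ext r
            exact Set.ext_iff.mp h r
          rw [hSinj this]
      · rintro ⟨c, σ⟩ huniv
        rcases h2 σ with rfl | rfl
        · rw [hf0] at huniv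
          exact ((Set.ext_iff.mp huniv r0).mpr trivial) (hSr0 c)
        · rw [hf1] at huniv
          apply hSuniv c
          ext r
          simp only [Finset.mem_univ, iff_true]
          exact (Set.ext_iff.mp huniv r).mpr trivial
  · -- part 3
    intro _
    congr 1
    ext k
    simp only [Set.mem_setOf_eq]
    constructor
    · rintro ⟨A, hinj, hne, -⟩; exact ⟨A, hinj, hne⟩
    · rintro ⟨A, hinj, hne⟩
      refine ⟨A, hinj, hne, ?_⟩
      rintro ⟨c, σ⟩ huniv
      have : Nontrivial (Fin v) := Fin.nontrivial_iff_two_le.mpr hv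
      obtain ⟨σ', hσ'⟩ := exists_ne σ
      obtain ⟨r, hr⟩ := hne (c, σ')
      have : A r c = σ := (Set.ext_iff.mp huniv r).mpr trivial
      exact hσ' (hr.symm.trans this)
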